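/- Let f(x) = c_n x^n + c_{n-1} x^{n-1} + … + c_0 ∈ ℤ[x] with c_n ≠ 0 and n ≥ 2. If gcd(c_{n-1}, n) = 1, then f is indecomposable over ℂ (f cannot be written as g ∘ h with g, h ∈ ℂ[x] of degree > 1). -/

import Mathlib

open Polynomial

theorem indecomposable_of_gcd_subleading_coeff (f : ℤ[X]) (n : ℕ) (hn : 2 ≤ n)
    (hdeg : f.natDegree = n) (hlead : f.coeff n ≠ 0)
    (hgcd : Nat.gcd (f.coeff (n - 1)).natAbs n = 1) :
    ¬ ∃ g h : Polynomial ℂ, 1 < g.natDegree ∧ 1 < h.natDegree ∧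
      f.map (Int.castRingHom ℂ) = g.comp h := by
  rintro ⟨g, h, hg1, hh1, hcomp⟩
  set φ := Int.castRingHom ℂ with hφ
  set a := g.natDegree with ha
  set b := h.natDegree with hb
  have hFdeg : (f.map φ).natDegree = n := by
    rw [natDegree_map_eq_of_injective (fun x y hxy => by simpa using hxy) f, hdeg]
  have hn' : n = a * b := by rw [← hFdeg, hcomp, natDegree_comp]
  -- normalize h to be monic
  have hh0 : h ≠ 0 := fun e => by simp [e, natDegree_zero] at hb; omega
  set c := h.leadingCoeff with hc
  have hc0 : c ≠ 0 := leadingCoeff_ne_zero.mpr hh0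
  set H := C c⁻¹ * h with hH
  set G := g.comp (C c * X) with hG
  have hHmonic : H.Monic := by
    have : H.leadingCoeff = 1 := by
      rw [hH, leadingCoeff_mul, leadingCoeff_C, inv_mul_cancel₀ hc0]
    exact this
  have hHdeg : H.natDegree = b := by rw [hH, natDegree_C_mul (inv_ne_zero hc0)]
  have hGdeg : G.natDegree = a := by
    rw [hG, natDegree_comp, natDegree_C_mul_X c hc0, mul_one]
  have hcompGH : f.map φ = G.comp H := by
    rw [hcomp, hG, comp_assoc]
    congr 1
    rw [mul_comp, C_comp, X_comp, hH, ← mul_assoc, ← C_mul, mul_inv_cancel₀ hc0, C_1, one_mul]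
  have hG0 : G ≠ 0 := fun e => by rw [e] at hGdeg; simp [← hGdeg] at hg1
  -- leading coefficient
  have hGlead : G.leadingCoeff = (f.coeff n : ℂ) := by
    have h1 : (f.map φ).leadingCoeff = (f.coeff n : ℂ) := by
      rw [leadingCoeff, hFdeg, coeff_map]; rfl
    have h2 := leadingCoeff_comp (p := G) (q := H) (show H.natDegree ≠ 0 by rw [hHdeg]; omega)
    rw [hHmonic.leadingCoeff, one_pow, mul_one] at h2
    rw [hcompGH, h2] at h1
    exact h1
  -- subleading coefficient identity
  have key : ((f.coeff (n-1) : ℂ)) = a * (f.coeff n : ℂ) * H.coeff (b-1) := by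
    have h1 : (f.map φ).coeff (n-1) = (f.coeff (n-1) : ℂ) := by rw [coeff_map]; rfl
    have hsplit : G.eraseLead.comp H + C G.leadingCoeff * H ^ a = G.comp H := by
      conv_rhs => rw [← eraseLead_add_C_mul_X_pow G]
      rw [add_comp, mul_comp, C_comp, X_pow_comp, hGdeg]
    have hzero : (G.eraseLead.comp H).coeff (n-1) = 0 := by
      apply coeff_eq_zero_of_natDegree_lt
      rw [natDegree_comp, hHdeg]
      have h2 : G.eraseLead.natDegree ≤ a - 1 := by rw [← hGdeg]; exact eraseLead_natDegree_le G
      have h3 : G.eraseLead.natDegree * b ≤ (a-1) * b := Nat.mul_le_mul_right b h2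
      have h4 : (a - 1) * b = a * b - b := by rw [Nat.sub_mul, one_mul]
      omega
    have hpowdeg : (H ^ a).natDegree = n := by
      rw [hHmonic.natDegree_pow, hHdeg, hn']
    have hpow : (H ^ a).coeff (n-1) = a * H.coeff (b-1) := by
      have h5 : (H ^ a).coeff (n-1) = (H ^ a).nextCoeff := by
        rw [nextCoeff_of_natDegree_pos (by omega : 0 < (H^a).natDegree), hpowdeg]
      have h6 : H.nextCoeff = H.coeff (b-1) := by
        rw [nextCoeff_of_natDegree_pos (by omega : 0 < H.natDegree), hHdeg]
      rw [h5, hHmonic.nextCoeff_pow, h6, nsmul_eq_mul]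
    rw [hcompGH, ← hsplit, coeff_add, hzero, zero_add, coeff_C_mul, hpow, hGlead] at h1
    rw [← h1]; ring
  -- roots of f.map φ times the leading coeff are integral over ℤ
  have hf0 : f ≠ 0 := fun e => by simp [e] at hlead
  have hint : ∀ α : ℂ, (f.map φ).eval α = 0 → IsIntegral ℤ ((f.coeff n : ℂ) * α) := by
    intro α hα
    have h7 : eval₂ φ α f = 0 := by rwa [eval_map] at hα
    have h8 := integralNormalization_eval₂_eq_zero φ h7
      (fun x hx => by simpa using hx)
    refine ⟨f.integralNormalization, monic_integralNormalization hf0, ?_⟩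
    have h9 : φ f.leadingCoeff = (f.coeff n : ℂ) := by
      rw [leadingCoeff, hdeg]; rfl
    rw [h9] at h8
    rw [algebraMap_int_eq]
    exact h8
  -- pick a prime dividing a
  obtain ⟨p, hp, hpa⟩ := Nat.exists_prime_and_dvd (show a ≠ 1 by omega)
  -- the subleading coefficient of H times c_n is integral
  obtain ⟨β, hβ⟩ := IsAlgClosed.exists_root G (by
    rw [degree_eq_natDegree hG0, hGdeg]
    exact_mod_cast (by omega : a ≠ 0))
  set q := H - C β with hq
  have hqmonic : q.Monic :=
    hHmonic.sub_of_left (lt_of_le_of_lt (degree_C_le) (by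
      rw [degree_eq_natDegree hHmonic.ne_zero, hHdeg]; exact_mod_cast (by omega : 0 < b)))
  have hqdeg : q.natDegree = b := by
    rw [hq, natDegree_sub_C, hHdeg]
  have hqnext : q.nextCoeff = H.coeff (b-1) := by
    rw [nextCoeff_of_natDegree_pos (by omega : 0 < q.natDegree), hqdeg, hq, coeff_sub,
      coeff_C, if_neg (by omega : ¬ (b - 1 = 0)), sub_zero]
  have hroots : q.nextCoeff = -q.roots.sum :=
    (IsAlgClosed.splits q).nextCoeff_eq_neg_sum_roots_of_monic hqmonic
  have hzint : IsIntegral ℤ ((f.coeff n : ℂ) * H.coeff (b-1)) := by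
    have hsum : (f.coeff n : ℂ) * q.roots.sum
        = (q.roots.map (fun α => (f.coeff n : ℂ) * α)).sum := by
      induction q.roots using Multiset.induction with
      | empty => simp
      | cons x s ih => simp [mul_add, ih]
    rw [← hqnext, hroots, mul_neg]
    apply IsIntegral.neg
    rw [hsum]
    have : ∀ x ∈ q.roots.map (fun α => (f.coeff n : ℂ) * α), x ∈ integralClosure ℤ ℂ := by
      intro x hx
      obtain ⟨α, hα, rfl⟩ := Multiset.mem_map.mp hx
      have hαroot : q.IsRoot α := isRoot_of_mem_roots hα
      have hHα : H.eval α = β := by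
        have := hαroot
        rw [hq, IsRoot, eval_sub, eval_C, sub_eq_zero] at this
        exact this
      apply hint
      rw [hcompGH, eval_comp, hHα, hβ]
    exact (integralClosure ℤ ℂ).multiset_sum_mem this
  -- coprimality
  have hpn : p ∣ n := hpa.trans ⟨b, hn'⟩
  have hcop : Nat.Coprime (f.coeff (n-1)).natAbs p :=
    Nat.Coprime.coprime_dvd_right hpn hgcd
  have hicop : IsCoprime (f.coeff (n-1)) (p : ℤ) := by
    rw [Int.isCoprime_iff_gcd_eq_one]
    exact hcop
  obtain ⟨u, v, huv⟩ := hicop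
  obtain ⟨k, hk⟩ := hpa
  -- derive that 1/p is integral over ℤ
  set z := (f.coeff n : ℂ) * H.coeff (b-1) with hz
  have hmain : (p : ℂ) * ((u : ℂ) * k * z + v) = 1 := by
    have h10 : ((f.coeff (n-1) : ℂ)) = (p : ℂ) * k * z := by
      rw [key, hz]
      push_cast [hk]
      ring
    have h11 : ((u * f.coeff (n-1) + v * p : ℤ) : ℂ) = 1 := by rw [huv]; norm_num
    push_cast at h11
    rw [h10] at h11
    rw [← h11]; ring
  have hwint : IsIntegral ℤ ((u : ℂ) * k * z + v) := by
    have h12 : IsIntegral ℤ ((u : ℂ) * k) := by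
      have : ((u : ℂ) * k) = ((u * k : ℤ) : ℂ) := by push_cast; ring
      rw [this]; exact isIntegral_algebraMap (R := ℤ)
    have h13 : IsIntegral ℤ ((v : ℂ)) := by
      have : ((v : ℂ)) = ((v : ℤ) : ℂ) := rfl
      rw [this]; exact isIntegral_algebraMap (R := ℤ)
    exact (h12.mul hzint).add h13
  have hp0 : (p : ℚ) ≠ 0 := by exact_mod_cast hp.ne_zero
  have hinv : ((u : ℂ) * k * z + v) = algebraMap ℚ ℂ ((p : ℚ)⁻¹) := by
    rw [map_inv₀]
    have hpq : algebraMap ℚ ℂ ((p : ℚ)) = (p : ℂ) := by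
      simp
    rw [hpq]
    exact (inv_eq_of_mul_eq_one_right hmain).symm
  rw [hinv] at hwint
  rw [isIntegral_algebraMap_iff (algebraMap ℚ ℂ).injective] at hwint
  obtain ⟨y, hy⟩ := IsIntegrallyClosed.isIntegral_iff.mp hwint
  have hy' : (y : ℚ) = (p : ℚ)⁻¹ := by
    rw [← hy]; simp
  have : (y : ℚ) * p = 1 := by
    rw [hy', inv_mul_cancel₀ hp0]
  have hyp : y * (p : ℤ) = 1 := by exact_mod_cast this
  have : (p : ℤ) ∣ 1 := ⟨y, by linarith⟩
  have := Int.eq_one_of_dvd_one (by positivity) this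
  simp at this
  have := hp.one_lt
  omega
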